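/- For every real number ξ with 0 < ξ < 1 and every nonzero integer j, the series ∑_{ℓ ∈ ℤ} 1/(|ℓ + ξ| · |ℓ − j + ξ|) converges and equals (2/|j|) · ∑_{k=0}^{|j|−1} ( 1/(k + ξ) + 1/(k + 1 − ξ) ). -/

import Mathlib

open Filter Finset

lemma tele_hasSum (h : ℕ → ℝ) (n : ℕ) (hmono : ∀ m, h (m + 1) ≤ h m)
    (hlim : Tendsto h atTop (nhds 0)) :
    HasSum (fun m => h m - h (m + n)) (∑ k ∈ Finset.range n, h k) := by
  have hanti : Antitone h := antitone_nat_of_succ_le hmono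
  have hnonneg : ∀ m, 0 ≤ h m - h (m + n) :=
    fun m => sub_nonneg.2 (hanti (Nat.le_add_right m n))
  rw [hasSum_iff_tendsto_nat_of_nonneg hnonneg]
  have key : ∀ M, ∑ m ∈ Finset.range M, (h m - h (m + n)) =
      ∑ k ∈ Finset.range n, h k - ∑ k ∈ Finset.range n, h (M + k) := by
    intro M
    have e1 : ∑ m ∈ Finset.range (n + M), h m
        = ∑ k ∈ Finset.range n, h k + ∑ m ∈ Finset.range M, h (m + n) := by
      rw [Finset.sum_range_add]
      congr 1
      exact Finset.sum_congr rfl fun m _ => by rw [Nat.add_comm]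
    have e2 : ∑ m ∈ Finset.range (n + M), h m
        = ∑ m ∈ Finset.range M, h m + ∑ k ∈ Finset.range n, h (M + k) := by
      rw [Nat.add_comm n M, Finset.sum_range_add]
    rw [Finset.sum_sub_distrib]
    have : ∑ m ∈ Finset.range M, h (m + n)
        = ∑ m ∈ Finset.range M, h m + ∑ k ∈ Finset.range n, h (M + k)
          - ∑ k ∈ Finset.range n, h k := by
      rw [← e2, e1]; ring
    rw [this]; ring
  have hterm : Tendsto (fun M => ∑ k ∈ Finset.range n, h (M + k)) atTop (nhds 0) := by
    have : Tendsto (fun M => ∑ k ∈ Finset.range n, h (M + k)) atTop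
        (nhds (∑ k ∈ Finset.range n, (0 : ℝ))) := by
      refine tendsto_finset_sum _ fun k _ => ?_
      exact hlim.comp (tendsto_add_atTop_nat k)
    simpa using this
  have := (tendsto_const_nhds (x := ∑ k ∈ Finset.range n, h k)).sub hterm
  simpa [key] using this

lemma main_pos (ξ : ℝ) (h0 : 0 < ξ) (h1 : ξ < 1) (n : ℕ) (hn : 0 < n) :
    HasSum (fun ℓ : ℤ => 1 / (|(ℓ : ℝ) + ξ| * |(ℓ : ℝ) - (n : ℝ) + ξ|))
      ((2 / (n : ℝ)) *
        ∑ k ∈ Finset.range n, (1 / ((k : ℝ) + ξ) + 1 / ((k : ℝ) + 1 - ξ))) := by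
  set f : ℤ → ℝ := fun ℓ => 1 / (|(ℓ : ℝ) + ξ| * |(ℓ : ℝ) - (n : ℝ) + ξ|) with hf
  have hnR : (0 : ℝ) < n := by exact_mod_cast hn
  set S1 : ℝ := ∑ k ∈ Finset.range n, 1 / ((k : ℝ) + ξ) with hS1
  set S2 : ℝ := ∑ k ∈ Finset.range n, 1 / ((k : ℝ) + 1 - ξ) with hS2
  -- tail over m ≥ 0 shifted by n
  have htail : HasSum (fun m : ℕ => f ((m : ℤ) + n)) ((1 / n) * S1) := by
    have := tele_hasSum (fun m : ℕ => (1 / n) * (1 / ((m : ℝ) + ξ))) n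
      (fun m => by
        have ha : (0:ℝ) < (m:ℝ) + ξ := by positivity
        have : 1 / (((m+1:ℕ):ℝ) + ξ) ≤ 1 / ((m:ℝ) + ξ) :=
          one_div_le_one_div_of_le ha (by push_cast; linarith)
        have hc : (0:ℝ) ≤ 1 / n := by positivity
        exact mul_le_mul_of_nonneg_left this hc)
      (by
        have : Tendsto (fun m : ℕ => (m : ℝ) + ξ) atTop atTop :=
          tendsto_atTop_add_const_right _ _ tendsto_natCast_atTop_atTop
        simpa [mul_comm] using (tendsto_const_nhds (x := (1:ℝ)/n)).mul this.inv_tendsto_atTop)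
    have heq : ∀ m : ℕ, (1 / (n:ℝ)) * (1 / ((m : ℝ) + ξ)) - (1 / n) * (1 / (((m + n : ℕ) : ℝ) + ξ))
        = f ((m : ℤ) + n) := by
      intro m
      have ha : (0:ℝ) < (m:ℝ) + ξ := by positivity
      have hb : (0:ℝ) < (m:ℝ) + n + ξ := by positivity
      simp only [hf]
      push_cast
      rw [abs_of_pos (by linarith), abs_of_pos (by ring_nf; linarith)]
      field_simp
      rw [show ((m:ℝ) + n - n + ξ) = m + ξ by ring, mul_div_assoc, div_self (ne_of_gt ha)]
      ring
    rw [hS1, Finset.mul_sum]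
    exact this.congr_fun fun m => (heq m).symm
  -- negative part
  have hneg : HasSum (fun m : ℕ => f (-((m : ℤ) + 1))) ((1 / n) * S2) := by
    have := tele_hasSum (fun m : ℕ => (1 / n) * (1 / ((m : ℝ) + 1 - ξ))) n
      (fun m => by
        have ha : (0:ℝ) < (m:ℝ) + 1 - ξ := by linarith [Nat.cast_nonneg (α := ℝ) m]
        have : 1 / (((m+1:ℕ):ℝ) + 1 - ξ) ≤ 1 / ((m:ℝ) + 1 - ξ) :=
          one_div_le_one_div_of_le ha (by push_cast; linarith)
        have hc : (0:ℝ) ≤ 1 / n := by positivity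
        exact mul_le_mul_of_nonneg_left this hc)
      (by
        have : Tendsto (fun m : ℕ => (m : ℝ) + 1 - ξ) atTop atTop := by
          have := tendsto_atTop_add_const_right atTop (1 - ξ) (tendsto_natCast_atTop_atTop (R := ℝ))
          simpa [add_sub_assoc] using this
        simpa [mul_comm] using (tendsto_const_nhds (x := (1:ℝ)/n)).mul this.inv_tendsto_atTop)
    have heq : ∀ m : ℕ, f (-((m : ℤ) + 1))
        = (1 / (n:ℝ)) * (1 / ((m : ℝ) + 1 - ξ)) - (1 / n) * (1 / (((m + n : ℕ) : ℝ) + 1 - ξ)) := by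
      intro m
      have ha : (0:ℝ) < (m:ℝ) + 1 - ξ := by linarith [Nat.cast_nonneg (α := ℝ) m]
      have hb : (0:ℝ) < (m:ℝ) + n + 1 - ξ := by linarith
      simp only [hf]
      push_cast
      rw [abs_of_neg (by linarith), abs_of_neg (by linarith)]
      rw [show (-(-((m:ℝ) + 1) + ξ)) * (-(-((m:ℝ) + 1) - (n:ℝ) + ξ))
          = ((m:ℝ) + 1 - ξ) * ((m:ℝ) + (n:ℝ) + 1 - ξ) by ring]
      have ha' : ((m:ℝ) + 1 - ξ) ≠ 0 := ne_of_gt ha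
      have hb' : ((m:ℝ) + (n:ℝ) + 1 - ξ) ≠ 0 := ne_of_gt hb
      have hn' : (n:ℝ) ≠ 0 := ne_of_gt hnR
      field_simp
      ring
    rw [hS2, Finset.mul_sum]
    exact this.congr_fun heq
  -- middle finite sum
  have hmid : ∑ m ∈ Finset.range n, f (m : ℤ) = (1 / n) * (S1 + S2) := by
    have step : ∀ m ∈ Finset.range n,
        f (m : ℤ) = (1 / (n:ℝ)) * (1 / ((m : ℝ) + ξ) + 1 / ((n : ℝ) - m - ξ)) := by
      intro m hm
      have hmn : m < n := Finset.mem_range.1 hm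
      have hmn' : (m : ℝ) + 1 ≤ n := by exact_mod_cast hmn
      have ha : (0:ℝ) < (m:ℝ) + ξ := by positivity
      have hb : (0:ℝ) < (n:ℝ) - m - ξ := by linarith
      simp only [hf]
      push_cast
      rw [abs_of_pos ha, abs_of_neg (by linarith)]
      rw [show ((m:ℝ) + ξ) * (-((m:ℝ) - (n:ℝ) + ξ)) = ((m:ℝ) + ξ) * ((n:ℝ) - (m:ℝ) - ξ) by ring]
      have ha' : ((m:ℝ) + ξ) ≠ 0 := ne_of_gt ha
      have hb' : ((n:ℝ) - (m:ℝ) - ξ) ≠ 0 := ne_of_gt hb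
      have hn' : (n:ℝ) ≠ 0 := ne_of_gt hnR
      field_simp
      ring
    rw [Finset.sum_congr rfl step, ← Finset.mul_sum, Finset.sum_add_distrib]
    congr 1
    rw [hS1, hS2]
    congr 1
    have := Finset.sum_range_reflect (fun j => 1 / ((j : ℝ) + 1 - ξ)) n
    rw [← this]
    refine Finset.sum_congr rfl fun m hm => ?_
    have hmn : m < n := Finset.mem_range.1 hm
    have : ((n - 1 - m : ℕ) : ℝ) = (n : ℝ) - 1 - m := by
      have h1 : m ≤ n - 1 := Nat.le_sub_one_of_lt hmn
      rw [Nat.cast_sub h1, Nat.cast_sub (Nat.one_le_of_lt hmn)]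
      push_cast; ring
    rw [this]; ring_nf
  -- combine nonneg part
  have hnat : HasSum (fun m : ℕ => f (m : ℤ)) ((1 / n) * S1 + (1 / n) * (S1 + S2)) := by
    have h' : HasSum (fun m : ℕ => f ((m + n : ℕ) : ℤ)) ((1 / n) * S1) :=
      htail.congr_fun (fun m => by push_cast; ring_nf)
    have := (hasSum_nat_add_iff (f := fun m : ℕ => f (m : ℤ)) n).1 h'
    rwa [hmid] at this
  have htot := hnat.of_nat_of_neg_add_one hneg
  have : (1 / (n:ℝ)) * S1 + (1 / n) * (S1 + S2) + (1 / n) * S2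
      = (2 / n) * ∑ k ∈ Finset.range n, (1 / ((k : ℝ) + ξ) + 1 / ((k : ℝ) + 1 - ξ)) := by
    rw [Finset.sum_add_distrib, ← hS1, ← hS2]; ring
  rwa [this] at htot

theorem stmt6 (ξ : ℝ) (h0 : 0 < ξ) (h1 : ξ < 1) (j : ℤ) (hj : j ≠ 0) :
    HasSum (fun ℓ : ℤ => 1 / (|(ℓ : ℝ) + ξ| * |(ℓ : ℝ) - (j : ℝ) + ξ|))
      ((2 / |(j : ℝ)|) *
        ∑ k ∈ Finset.range j.natAbs, (1 / ((k : ℝ) + ξ) + 1 / ((k : ℝ) + 1 - ξ))) := by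
  set n : ℕ := j.natAbs with hn
  have hn0 : 0 < n := Int.natAbs_pos.2 hj
  have habs : |(j : ℝ)| = (n : ℝ) := by
    rw [← Int.cast_abs, Int.abs_eq_natAbs, hn, Int.cast_natCast]
  rw [habs]
  rcases lt_or_gt_of_ne hj with hneg | hpos
  · have hjn : (j : ℝ) = -(n : ℝ) := by
      have : j = -(n : ℤ) := by omega
      rw [this]; push_cast; ring
    have base := main_pos ξ h0 h1 n hn0
    have := ((Equiv.addRight (n : ℤ)).hasSum_iff).2 base
    refine this.congr_fun fun ℓ => ?_
    simp only [Function.comp, Equiv.coe_addRight, hjn]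
    push_cast
    rw [mul_comm]
    congr 2 <;> ring_nf
  · have hjn : (j : ℝ) = (n : ℝ) := by
      have : j = (n : ℤ) := by rw [hn]; omega
      rw [this]; push_cast; rfl
    rw [hjn] at *
    exact main_pos ξ h0 h1 n hn0
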